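/- Let p be a prime, R = ℤ_p[[X, Y]] the formal power series ring in two variables over ℤ_p, and π : R → ℤ_p[[Y]] the ℤ_p-algebra homomorphism given by setting X = 0. Let f, g ∈ R. Suppose g ∈ (f) (i.e., f divides g in R), π(g) ≠ 0, and π(f) ∈ (π(g)) in ℤ_p[[Y]]. Then (f) = (g) as ideals of R. -/

import Mathlib

open PowerSeries

/-- Let `p` be a prime and `R = ℤ_p[[X, Y]]`, realized as the power series
ring in the variable `X` over `ℤ_p[[Y]]`, and let `π : R → ℤ_p[[Y]]` be the
`ℤ_p`-algebra homomorphism setting `X = 0` (the constant coefficient in `X`).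
Let `f, g ∈ R` with `g ∈ (f)`, `π(g) ≠ 0` and `π(f) ∈ (π(g))` in `ℤ_p[[Y]]`.
Then `(f) = (g)` as ideals of `R`. -/
theorem span_eq_of_dvd_and_specialization_dvd (p : ℕ) [Fact p.Prime]
    (f g : PowerSeries (PowerSeries ℤ_[p]))
    (hfg : g ∈ Ideal.span {f})
    (hg0 : constantCoeff (R := PowerSeries ℤ_[p]) g ≠ 0)
    (hgf : constantCoeff (R := PowerSeries ℤ_[p]) f ∈
      Ideal.span {constantCoeff (R := PowerSeries ℤ_[p]) g}) :
    Ideal.span {f} = Ideal.span {g} := by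
  obtain ⟨h, rfl⟩ := Ideal.mem_span_singleton.mp hfg
  obtain ⟨k, hk⟩ := Ideal.mem_span_singleton.mp hgf
  rw [map_mul] at hg0 hk
  have key : constantCoeff (R := PowerSeries ℤ_[p]) h * k = 1 := by
    have h2 : constantCoeff (R := PowerSeries ℤ_[p]) f *
        (constantCoeff (R := PowerSeries ℤ_[p]) h * k) =
        constantCoeff (R := PowerSeries ℤ_[p]) f * 1 := by
      rw [mul_one]; nth_rewrite 2 [hk]; ring
    have hf0 : constantCoeff (R := PowerSeries ℤ_[p]) f ≠ 0 := fun h0 => hg0 (by rw [h0, zero_mul])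
    exact mul_left_cancel₀ hf0 h2
  have hu : IsUnit h := isUnit_iff_constantCoeff.mpr (IsUnit.of_mul_eq_one _ key)
  rw [Ideal.span_singleton_eq_span_singleton]
  exact ⟨hu.unit, rfl⟩
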